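/- For every k ∈ ℕ, every depth-k local policy π, and every local state x ∈ X: ν^D_k(π)(x) ≤ ν^IO_k(π)(x). Consequently, for any nonnegative b0 : X → ℝ summing to 1 and any horizon h, the influence-optimistic Q-Dec-POMDP bound is at most the influence-optimistic Q-MPOMDP bound: sup_π Σ_x b0(x)·ν^D_h(π)(x) ≤ sup_π Σ_x b0(x)·ν^IO_h(π)(x). -/

import Mathlib

open Finset

section LocalModel

variable {Xl Xn A O U : Type*}
  [Fintype Xl] [Nonempty Xl] [Fintype Xn] [Nonempty Xn]
  [Fintype A] [Nonempty A] [Fintype O] [Nonempty O] [Fintype U] [Nonempty U]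

/-- Influence-optimistic (IO, Q-MPOMDP style) value vectors `ν^IO_k(π)(x)`. A depth-`k`
local policy is a function `List O → A`; `π []` is its action at the empty history and
`fun h => π (o :: h)` is the subtree policy `π↓o`. -/
noncomputable def nuIO (Pl : Xl → (Xl × Xn) → A → ℝ) (Pn : Xn → (Xl × Xn) → A → U → ℝ)
    (Ω : O → A → (Xl × Xn) → ℝ) (r : A → (Xl × Xn) → ℝ) :
    ℕ → (List O → A) → (Xl × Xn) → ℝ
  | 0 => fun _ _ => 0
  | k + 1 => fun π x =>
      r (π []) x + ∑ o : O,
        Finset.univ.sup' Finset.univ_nonempty (fun u : U =>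
          ∑ x' : Xl × Xn,
            Ω o (π []) x' * Pl x'.1 x (π []) * Pn x'.2 x (π []) u *
              nuIO Pl Pn Ω r k (fun h => π (o :: h)) x')

/-- Influence-optimistic plan-time (Dec-POMDP) value vectors `ν^D_k(π)(x)`. -/
noncomputable def nuD (Pl : Xl → (Xl × Xn) → A → ℝ) (Pn : Xn → (Xl × Xn) → A → U → ℝ)
    (Ω : O → A → (Xl × Xn) → ℝ) (r : A → (Xl × Xn) → ℝ) :
    ℕ → (List O → A) → (Xl × Xn) → ℝ
  | 0 => fun _ _ => 0
  | k + 1 => fun π x =>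
      r (π []) x +
        Finset.univ.sup' Finset.univ_nonempty (fun u : U =>
          ∑ o : O, ∑ x' : Xl × Xn,
            Ω o (π []) x' * Pl x'.1 x (π []) * Pn x'.2 x (π []) u *
              nuD Pl Pn Ω r k (fun h => π (o :: h)) x')

/-- Recursive horizon-dependent bound. -/
noncomputable def Cbd (R : ℝ) (cO : ℕ) : ℕ → ℝ
  | 0 => 0
  | k + 1 => R + cO * Cbd R cO k

lemma Cbd_nonneg {R : ℝ} (hR : 0 ≤ R) (cO : ℕ) : ∀ k, 0 ≤ Cbd R cO k
  | 0 => le_refl 0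
  | k + 1 => by
      have := Cbd_nonneg hR cO k
      simp only [Cbd]
      positivity

lemma nuIO_le_Cbd (Pl : Xl → (Xl × Xn) → A → ℝ) (Pn : Xn → (Xl × Xn) → A → U → ℝ)
    (Ω : O → A → (Xl × Xn) → ℝ) (r : A → (Xl × Xn) → ℝ)
    (hPl0 : ∀ x'l x a, 0 ≤ Pl x'l x a) (hPl1 : ∀ x a, ∑ x'l : Xl, Pl x'l x a = 1)
    (hPn0 : ∀ x'n x a u, 0 ≤ Pn x'n x a u) (hPn1 : ∀ x a u, ∑ x'n : Xn, Pn x'n x a u = 1)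
    (hΩ0 : ∀ o a x', 0 ≤ Ω o a x') (hΩ1 : ∀ a x', ∑ o : O, Ω o a x' = 1)
    {R : ℝ} (hR : ∀ a x, r a x ≤ R) (hR0 : 0 ≤ R) :
    ∀ (k : ℕ) (π : List O → A) (x : Xl × Xn),
      nuIO Pl Pn Ω r k π x ≤ Cbd R (Fintype.card O) k := by
  intro k
  induction k with
  | zero => intro π x; simp [nuIO, Cbd]
  | succ k ih =>
    intro π x
    have hC := Cbd_nonneg hR0 (Fintype.card O) k
    have hΩle : ∀ o a x', Ω o a x' ≤ 1 := by
      intro o a x'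
      calc Ω o a x' ≤ ∑ o' : O, Ω o' a x' :=
            Finset.single_le_sum (fun i _ => hΩ0 i a x') (Finset.mem_univ o)
        _ = 1 := hΩ1 a x'
    simp only [nuIO, Cbd]
    apply add_le_add (hR _ _)
    calc (∑ o : O, Finset.univ.sup' Finset.univ_nonempty (fun u : U =>
            ∑ x' : Xl × Xn,
              Ω o (π []) x' * Pl x'.1 x (π []) * Pn x'.2 x (π []) u *
                nuIO Pl Pn Ω r k (fun h => π (o :: h)) x'))
        ≤ ∑ _o : O, Cbd R (Fintype.card O) k := by
          apply Finset.sum_le_sum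
          intro o _
          apply Finset.sup'_le
          intro u _
          calc (∑ x' : Xl × Xn,
                  Ω o (π []) x' * Pl x'.1 x (π []) * Pn x'.2 x (π []) u *
                    nuIO Pl Pn Ω r k (fun h => π (o :: h)) x')
              ≤ ∑ x' : Xl × Xn,
                  Pl x'.1 x (π []) * Pn x'.2 x (π []) u * Cbd R (Fintype.card O) k := by
                apply Finset.sum_le_sum
                intro x' _
                have h1 : Ω o (π []) x' * Pl x'.1 x (π []) * Pn x'.2 x (π []) u *
                    nuIO Pl Pn Ω r k (fun h => π (o :: h)) x'
                    ≤ Ω o (π []) x' * Pl x'.1 x (π []) * Pn x'.2 x (π []) u *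
                      Cbd R (Fintype.card O) k := by
                  apply mul_le_mul_of_nonneg_left (ih _ _)
                  exact mul_nonneg (mul_nonneg (hΩ0 _ _ _) (hPl0 _ _ _)) (hPn0 _ _ _ _)
                refine h1.trans ?_
                apply mul_le_mul_of_nonneg_right _ hC
                calc Ω o (π []) x' * Pl x'.1 x (π []) * Pn x'.2 x (π []) u
                    ≤ 1 * Pl x'.1 x (π []) * Pn x'.2 x (π []) u := by
                      apply mul_le_mul_of_nonneg_right _ (hPn0 _ _ _ _)
                      exact mul_le_mul_of_nonneg_right (hΩle _ _ _) (hPl0 _ _ _)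
                  _ = Pl x'.1 x (π []) * Pn x'.2 x (π []) u := by ring
            _ = Cbd R (Fintype.card O) k := by
                rw [← Finset.sum_mul]
                have : (∑ x' : Xl × Xn, Pl x'.1 x (π []) * Pn x'.2 x (π []) u) = 1 := by
                  rw [Fintype.sum_prod_type]
                  simp only [← Finset.sum_mul, ← Finset.mul_sum, hPl1, hPn1, one_mul]
                rw [this, one_mul]
      _ = (Fintype.card O : ℝ) * Cbd R (Fintype.card O) k := by
          simp [Finset.sum_const, Finset.card_univ, nsmul_eq_mul]

/-- the influence-optimistic plan-time (Dec-POMDP) vectors are pointwise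
at most the influence-optimistic MPOMDP vectors; consequently the IO-Q-Dec-POMDP bound
is at most the IO-Q-MPOMDP bound for any initial belief and horizon. -/
theorem nuD_le_nuIO
    (Pl : Xl → (Xl × Xn) → A → ℝ) (Pn : Xn → (Xl × Xn) → A → U → ℝ)
    (Ω : O → A → (Xl × Xn) → ℝ) (r : A → (Xl × Xn) → ℝ)
    (hPl0 : ∀ x'l x a, 0 ≤ Pl x'l x a) (hPl1 : ∀ x a, ∑ x'l : Xl, Pl x'l x a = 1)
    (hPn0 : ∀ x'n x a u, 0 ≤ Pn x'n x a u) (hPn1 : ∀ x a u, ∑ x'n : Xn, Pn x'n x a u = 1)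
    (hΩ0 : ∀ o a x', 0 ≤ Ω o a x') (hΩ1 : ∀ a x', ∑ o : O, Ω o a x' = 1) :
    (∀ (k : ℕ) (π : List O → A) (x : Xl × Xn),
        nuD Pl Pn Ω r k π x ≤ nuIO Pl Pn Ω r k π x) ∧
      ∀ (b0 : Xl × Xn → ℝ), (∀ x, 0 ≤ b0 x) → (∑ x : Xl × Xn, b0 x = 1) → ∀ h : ℕ,
        (⨆ π : List O → A, ∑ x : Xl × Xn, b0 x * nuD Pl Pn Ω r h π x) ≤
          ⨆ π : List O → A, ∑ x : Xl × Xn, b0 x * nuIO Pl Pn Ω r h π x := by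
  have key : ∀ (k : ℕ) (π : List O → A) (x : Xl × Xn),
      nuD Pl Pn Ω r k π x ≤ nuIO Pl Pn Ω r k π x := by
    intro k
    induction k with
    | zero => intro π x; simp [nuD, nuIO]
    | succ k ih =>
      intro π x
      simp only [nuD, nuIO]
      apply add_le_add_right
      apply Finset.sup'_le
      intro u _
      calc (∑ o : O, ∑ x' : Xl × Xn,
              Ω o (π []) x' * Pl x'.1 x (π []) * Pn x'.2 x (π []) u *
                nuD Pl Pn Ω r k (fun h => π (o :: h)) x')
          ≤ ∑ o : O, ∑ x' : Xl × Xn,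
              Ω o (π []) x' * Pl x'.1 x (π []) * Pn x'.2 x (π []) u *
                nuIO Pl Pn Ω r k (fun h => π (o :: h)) x' := by
            apply Finset.sum_le_sum
            intro o _
            apply Finset.sum_le_sum
            intro x' _
            apply mul_le_mul_of_nonneg_left (ih _ _)
            exact mul_nonneg (mul_nonneg (hΩ0 _ _ _) (hPl0 _ _ _)) (hPn0 _ _ _ _)
        _ ≤ ∑ o : O, Finset.univ.sup' Finset.univ_nonempty (fun u : U =>
              ∑ x' : Xl × Xn,
                Ω o (π []) x' * Pl x'.1 x (π []) * Pn x'.2 x (π []) u *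
                  nuIO Pl Pn Ω r k (fun h => π (o :: h)) x') := by
            apply Finset.sum_le_sum
            intro o _
            exact Finset.le_sup' (fun u : U =>
              ∑ x' : Xl × Xn,
                Ω o (π []) x' * Pl x'.1 x (π []) * Pn x'.2 x (π []) u *
                  nuIO Pl Pn Ω r k (fun h => π (o :: h)) x') (Finset.mem_univ u)
  refine ⟨key, ?_⟩
  intro b0 hb0 hb1 h
  obtain ⟨R, hR, hR0⟩ : ∃ R : ℝ, (∀ a x, r a x ≤ R) ∧ 0 ≤ R := by
    refine ⟨Finset.univ.sup' Finset.univ_nonempty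
      (fun p : A × (Xl × Xn) => |r p.1 p.2|), ?_, ?_⟩
    · intro a x
      exact (le_abs_self _).trans
        (Finset.le_sup' (fun p : A × (Xl × Xn) => |r p.1 p.2|) (Finset.mem_univ (a, x)))
    · obtain ⟨p⟩ := (inferInstance : Nonempty (A × (Xl × Xn)))
      exact (abs_nonneg (r p.1 p.2)).trans
        (Finset.le_sup' (fun p : A × (Xl × Xn) => |r p.1 p.2|) (Finset.mem_univ p))
  have hbd := nuIO_le_Cbd Pl Pn Ω r hPl0 hPl1 hPn0 hPn1 hΩ0 hΩ1 hR hR0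
  have hBdd : BddAbove (Set.range fun π : List O → A =>
      ∑ x : Xl × Xn, b0 x * nuIO Pl Pn Ω r h π x) := by
    refine ⟨Cbd R (Fintype.card O) h, ?_⟩
    rintro _ ⟨π, rfl⟩
    calc (∑ x : Xl × Xn, b0 x * nuIO Pl Pn Ω r h π x)
        ≤ ∑ x : Xl × Xn, b0 x * Cbd R (Fintype.card O) h := by
          apply Finset.sum_le_sum
          intro x _
          exact mul_le_mul_of_nonneg_left (hbd h π x) (hb0 x)
      _ = Cbd R (Fintype.card O) h := by rw [← Finset.sum_mul, hb1, one_mul]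
  apply ciSup_mono hBdd
  intro π
  apply Finset.sum_le_sum
  intro x _
  exact mul_le_mul_of_nonneg_left (key h π x) (hb0 x)

end LocalModel
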